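/- Let f₀, β : EuclideanSpace ℝ (Fin 2) → ℝ be differentiable at a point p, let k > 0, and assume f₀(p) > 0, β(p) = 0, and ∇β(p) ≠ 0. Let φ(q) = f₀(q)/(f₀(q)^k + β(q))^(1/k) be the Rimon–Koditschek potential, and let α, ω, C, h > 0 be real constants. Then −(αωC/(2(h² + ω²))) · ⟨∇β(p), (I + (h/ω)·J)(∇φ(p))⟩ = (αωC · f₀(p)^(−k) / (2k(h² + ω²))) · ‖∇β(p)‖², and this quantity is strictly positive. -/

import Mathlib

/-- The skew-symmetric rotation `J = [[0,1],[-1,0]]` on the plane: `J(v₁,v₂) = (v₂,-v₁)`. -/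
noncomputable def Jmap (v : EuclideanSpace ℝ (Fin 2)) : EuclideanSpace ℝ (Fin 2) :=
  WithLp.toLp 2 ![v 1, -v 0]

/-- On the obstacle boundary (`β(p) = 0`), the averaged rate of change of
`β` along the perturbed gradient flow of the Rimon–Koditschek potential
`φ(q) = f₀(q)/(f₀(q)^k + β(q))^(1/k)` satisfies
`-(αωC/(2(h²+ω²))) ⟨∇β(p), (I + (h/ω)J) ∇φ(p)⟩
    = (αωC f₀(p)^(-k)/(2k(h²+ω²))) ‖∇β(p)‖²`,
a strictly positive quantity. -/
theorem beta_increases_on_boundary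
    (f₀ β : EuclideanSpace ℝ (Fin 2) → ℝ) (p : EuclideanSpace ℝ (Fin 2))
    (k α ω C h : ℝ) (hk : 0 < k) (hα : 0 < α) (hω : 0 < ω) (hC : 0 < C) (hh : 0 < h)
    (hf₀ : DifferentiableAt ℝ f₀ p) (hβ : DifferentiableAt ℝ β p)
    (hfpos : 0 < f₀ p) (hβ0 : β p = 0) (hgradβ : gradient β p ≠ 0) :
    -(α * ω * C / (2 * (h ^ 2 + ω ^ 2))) *
        (inner ℝ (gradient β p)
          (gradient (fun q => f₀ q / (f₀ q ^ k + β q) ^ (1 / k)) p +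
            (h / ω) • Jmap (gradient (fun q => f₀ q / (f₀ q ^ k + β q) ^ (1 / k)) p)) : ℝ)
      = α * ω * C * f₀ p ^ (-k) / (2 * k * (h ^ 2 + ω ^ 2)) * ‖gradient β p‖ ^ 2 ∧
    0 < α * ω * C * f₀ p ^ (-k) / (2 * k * (h ^ 2 + ω ^ 2)) * ‖gradient β p‖ ^ 2 := by
  set c := f₀ p with hc
  have hk' : k ≠ 0 := hk.ne'
  have hcpos : (0:ℝ) < c := hfpos
  have hckpos : (0:ℝ) < c ^ k := Real.rpow_pos_of_pos hcpos k
  set v : EuclideanSpace ℝ (Fin 2) := gradient β p with hv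
  have hβF : HasFDerivAt β (InnerProductSpace.toDual ℝ _ v) p :=
    hβ.hasGradientAt.hasFDerivAt
  have hfF : HasFDerivAt f₀ (fderiv ℝ f₀ p) p := hf₀.hasFDerivAt
  set f' := fderiv ℝ f₀ p with hf'
  set β' := InnerProductSpace.toDual ℝ (EuclideanSpace ℝ (Fin 2)) v with hβ'
  have hg : HasFDerivAt (fun q => f₀ q ^ k + β q)
      ((k * c ^ (k - 1)) • f' + β') p :=
    (hfF.rpow_const (Or.inl hcpos.ne')).add hβF
  have hgp : f₀ p ^ k + β p = c ^ k := by rw [hβ0, ← hc]; ring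
  have hu : HasFDerivAt (fun q => (f₀ q ^ k + β q) ^ (1 / k))
      ((1 / k * (c ^ k) ^ (1 / k - 1)) • ((k * c ^ (k - 1)) • f' + β')) p := by
    have := hg.rpow_const (p := 1 / k) (Or.inl (by rw [hgp]; exact hckpos.ne'))
    rwa [hgp] at this
  have hup : (f₀ p ^ k + β p) ^ (1 / k) = c := by
    rw [hgp, ← Real.rpow_mul hcpos.le, mul_one_div, div_self hk', Real.rpow_one]
  -- inverse of u
  have hinv : HasFDerivAt (fun q => (((f₀ q ^ k + β q) ^ (1 / k)))⁻¹)
      ((-(c ^ 2)⁻¹) • ((1 / k * (c ^ k) ^ (1 / k - 1)) • ((k * c ^ (k - 1)) • f' + β'))) p := by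
    have hd := hasDerivAt_inv (x := (f₀ p ^ k + β p) ^ (1 / k)) (by rw [hup]; exact hcpos.ne')
    have h0 := hd.comp_hasFDerivAt p hu
    rwa [hup] at h0
  have hφ : HasFDerivAt (fun q => f₀ q / (f₀ q ^ k + β q) ^ (1 / k))
      ((-(c ^ (-k) / k)) • β') p := by
    have hmul := hfF.mul hinv
    rw [hup] at hmul
    have heq : (fun q => f₀ q / (f₀ q ^ k + β q) ^ (1 / k))
        = fun q => f₀ q * ((f₀ q ^ k + β q) ^ (1 / k))⁻¹ := by
      funext q; rw [div_eq_mul_inv]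
    rw [heq]
    convert hmul using 1
    case e'_4 | e'_8 | e'_9 | e'_11 => rfl
    have e2 : (c ^ k) ^ (1 / k - 1) = c ^ (1 - k) := by
      rw [← Real.rpow_mul hcpos.le]
      congr 1
      field_simp
    have e3 : c ^ (1 - k) * c ^ (k - 1) = 1 := by
      rw [← Real.rpow_add hcpos]; norm_num
    have e5 : c ^ (-k) * c ^ (k - 1) * c = 1 := by
      rw [← Real.rpow_add hcpos]
      rw [show -k + (k - 1) = -1 by ring, Real.rpow_neg_one]
      field_simp
    have e4 : c ^ (1 - k) = c * c ^ (-k) := by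
      rw [show (1:ℝ) - k = 1 + -k by ring, Real.rpow_add hcpos, Real.rpow_one]
    rw [e2, e4]
    simp only [← hc]
    match_scalars
    · field_simp
    · field_simp
      linear_combination e5
  -- gradient of φ
  have hφg : gradient (fun q => f₀ q / (f₀ q ^ k + β q) ^ (1 / k)) p
      = (-(c ^ (-k) / k)) • v := by
    refine HasGradientAt.gradient ?_
    rw [hasGradientAt_iff_hasFDerivAt, map_smul]
    exact hφ
  rw [hφg]
  set t : ℝ := -(c ^ (-k) / k) with ht
  have hJ : Jmap (t • v) = t • Jmap v := by
    unfold Jmap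
    ext i
    fin_cases i <;> simp [PiLp.smul_apply, smul_eq_mul] <;> ring
  have hJv : (inner ℝ v (Jmap v) : ℝ) = 0 := by
    unfold Jmap
    rw [PiLp.inner_apply]
    simp [Fin.sum_univ_two, RCLike.inner_apply]
    ring
  have hinner : (inner ℝ v (t • v + (h / ω) • Jmap (t • v)) : ℝ)
      = t * ‖v‖ ^ 2 := by
    rw [hJ, inner_add_right, real_inner_smul_right, real_inner_smul_right,
      real_inner_smul_right, hJv, real_inner_self_eq_norm_sq]
    ring
  constructor
  · rw [hinner, ht]
    have hsum : h ^ 2 + ω ^ 2 ≠ 0 := by positivity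
    field_simp
  · have hvpos : 0 < ‖v‖ := norm_pos_iff.mpr hgradβ
    have hck' : (0:ℝ) < c ^ (-k) := Real.rpow_pos_of_pos hcpos _
    positivity
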